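/- For every n ≥ 1, f_0(n) ≥ √(n+1)/2, i.e., the cube [-1/2,1/2]^n contains a regular n-simplex of edge length √(n+1)/2 with barycenter at the origin. -/

import Mathlib

open Real Matrix

/-- `simplexInCube n ℓ` : an isometric copy of the regular n-simplex of edge length ℓ
with barycenter at the origin is contained in the cube [-1/2, 1/2]ⁿ. -/
def simplexInCube (n : ℕ) (ℓ : ℝ) : Prop :=
  ∃ p : Fin (n + 1) → EuclideanSpace ℝ (Fin n),
    (∀ i j, i ≠ j → dist (p i) (p j) = ℓ) ∧ (∑ i, p i = 0) ∧
    ∀ i k, |p i k| ≤ 1 / 2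

/-- `f0 n` : the largest edge length of a regular n-simplex with barycenter at the
origin contained in the unit cube. -/
noncomputable def f0 (n : ℕ) : ℝ := sSup {ℓ : ℝ | simplexInCube n ℓ}

namespace Stmt5Aux

open Finset


noncomputable def om (m : ℕ) : ℂ := Complex.exp (2 * Real.pi * Complex.I / m)

lemma om_eq (m : ℕ) : om m = Complex.exp ((((2 * Real.pi / m : ℝ)) : ℂ) * Complex.I) := by
  unfold om; congr 1; push_cast; ring

lemma abs_om (m : ℕ) : ‖om m‖ = 1 := by
  rw [om_eq]; exact Complex.norm_exp_ofReal_mul_I _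

lemma normSq_om_pow (m t : ℕ) : Complex.normSq (om m ^ t) = 1 := by
  rw [Complex.normSq_eq_norm_sq, norm_pow, abs_om, one_pow, one_pow]

lemma om_ne_zero (m : ℕ) : om m ≠ 0 := Complex.exp_ne_zero _

lemma om_pow_m (m : ℕ) (hm : m ≠ 0) : om m ^ m = 1 :=
  (Complex.isPrimitiveRoot_exp m hm).pow_eq_one

lemma sum_pow_eq_zero {m : ℕ} {v : ℂ} (h1 : v ^ m = 1) (h2 : v ≠ 1) :
    ∑ r ∈ range m, v ^ r = 0 := by
  rw [geom_sum_eq h2, h1]; simp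

lemma im_sum_pow {m : ℕ} {v : ℂ} (h1 : v ^ m = 1) :
    (∑ r ∈ range m, v ^ r).im = 0 := by
  by_cases h2 : v = 1
  · subst h2; simp
  · rw [sum_pow_eq_zero h1 h2]; simp

lemma sq_re_add_im (z : ℂ) : (z.re + z.im) ^ 2 = Complex.normSq z + (z ^ 2).im := by
  simp [Complex.normSq_apply, sq, Complex.mul_im]; ring

lemma conj_om_pow (m t : ℕ) : (starRingEnd ℂ) (om m ^ t) = (om m ^ t)⁻¹ := by
  rw [Complex.inv_def, normSq_om_pow]; simp

noncomputable def pt (n : ℕ) : Fin (n + 1) → EuclideanSpace ℝ (Fin n) :=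
  fun i => WithLp.toLp 2 fun k => ((om (n+1) ^ ((i : ℕ) * ((k : ℕ) + 1))).re
      + (om (n+1) ^ ((i : ℕ) * ((k : ℕ) + 1))).im) / (2 * Real.sqrt 2)

section main
variable {n : ℕ}

lemma dist_sq_sum (i j : Fin (n+1)) (hij : i ≠ j) :
    ∑ k : Fin n, (pt n i k - pt n j k) ^ 2 = ((n : ℝ) + 1) / 4 := by
  have hm0 : n + 1 ≠ 0 := Nat.succ_ne_zero n
  set ω := om (n+1) with hω
  have hω1 : ω ^ (n+1) = 1 := om_pow_m (n+1) hm0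
  set D : ℕ → ℂ := fun r => ω ^ ((i : ℕ) * r) - ω ^ ((j : ℕ) * r) with hD
  have h8 : (2 * Real.sqrt 2) ^ 2 = 8 := by
    rw [mul_pow, Real.sq_sqrt (by norm_num : (0:ℝ) ≤ 2)]; norm_num
  have hcoord : ∀ k : Fin n, (pt n i k - pt n j k) ^ 2 =
      (Complex.normSq (D ((k : ℕ) + 1)) + ((D ((k : ℕ) + 1)) ^ 2).im) / 8 := by
    intro k
    have h1 : pt n i k - pt n j k =
        ((D ((k:ℕ)+1)).re + (D ((k:ℕ)+1)).im) / (2 * Real.sqrt 2) := by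
      simp only [pt, PiLp.toLp_apply, hD, Complex.sub_re, Complex.sub_im, ← hω]
      ring
    rw [h1, div_pow, h8, sq_re_add_im]
  -- part A
  set u : ℂ := ω ^ (i:ℕ) * (starRingEnd ℂ) (ω ^ (j:ℕ)) with hu
  have hum : u ^ (n+1) = 1 := by
    rw [hu, mul_pow, ← map_pow, ← pow_mul, ← pow_mul, mul_comm (i:ℕ), mul_comm (j:ℕ),
      pow_mul, pow_mul, hω1, one_pow, one_pow, _root_.map_one, mul_one]
  have hune : u ≠ 1 := by
    intro h
    rw [hu, conj_om_pow] at h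
    have hne : ω ^ (j:ℕ) ≠ 0 := pow_ne_zero _ (om_ne_zero _)
    have : ω ^ (i:ℕ) = ω ^ (j:ℕ) := by
      field_simp at h; exact (div_eq_one_iff_eq hne).mp h
    exact hij (Fin.val_injective
      ((Complex.isPrimitiveRoot_exp (n+1) hm0).pow_inj i.isLt j.isLt this))
  have hDr : ∀ r, Complex.normSq (D r) = 2 - 2 * (u ^ r).re := by
    intro r
    rw [hD]
    show Complex.normSq (ω ^ ((i:ℕ)*r) - ω ^ ((j:ℕ)*r)) = _
    rw [Complex.normSq_sub, normSq_om_pow, normSq_om_pow, pow_mul, pow_mul,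
      map_pow, ← mul_pow, ← hu]
    ring
  have hA : ∑ r ∈ range (n+1), Complex.normSq (D r) = 2 * ((n:ℝ)+1) := by
    rw [Finset.sum_congr rfl (fun r _ => hDr r), Finset.sum_sub_distrib,
      Finset.sum_const, ← Finset.mul_sum, ← Complex.re_sum,
      sum_pow_eq_zero hum hune]
    simp
    ring
  -- part B
  have hsq : ∀ r, (D r) ^ 2 =
      (ω ^ (2*(i:ℕ))) ^ r - 2 * (ω ^ ((i:ℕ)+(j:ℕ))) ^ r + (ω ^ (2*(j:ℕ))) ^ r := by
    intro r
    show (ω ^ ((i:ℕ)*r) - ω ^ ((j:ℕ)*r)) ^ 2 = _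
    rw [← pow_mul, ← pow_mul, ← pow_mul]
    ring
  have him : ∀ c : ℕ, ((ω ^ c) ^ (n+1) : ℂ) = 1 := by
    intro c
    rw [← pow_mul, mul_comm, pow_mul, hω1, one_pow]
  have hB : ∑ r ∈ range (n+1), ((D r) ^ 2).im = 0 := by
    rw [← Complex.im_sum, Finset.sum_congr rfl (fun r _ => hsq r),
      Finset.sum_add_distrib, Finset.sum_sub_distrib, ← Finset.mul_sum]
    have e1 := im_sum_pow (him (2*(i:ℕ)))
    have e2 := im_sum_pow (him ((i:ℕ)+(j:ℕ)))
    have e3 := im_sum_pow (him (2*(j:ℕ)))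
    simp [Complex.add_im, Complex.sub_im, Complex.mul_im, e1, e2, e3]
  -- assemble
  have hg0 : Complex.normSq (D 0) + ((D 0) ^ 2).im = 0 := by
    have : D 0 = 0 := by simp [hD]
    rw [this]; simp
  calc ∑ k : Fin n, (pt n i k - pt n j k) ^ 2
      = ∑ k : Fin n, (Complex.normSq (D ((k:ℕ)+1)) + ((D ((k:ℕ)+1)) ^ 2).im) / 8 :=
        Finset.sum_congr rfl (fun k _ => hcoord k)
    _ = (∑ k ∈ range n, (Complex.normSq (D (k+1)) + ((D (k+1)) ^ 2).im)) / 8 := by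
        rw [← Finset.sum_div, Fin.sum_univ_eq_sum_range
          (fun k => Complex.normSq (D (k+1)) + ((D (k+1)) ^ 2).im) n]
    _ = ((∑ r ∈ range (n+1), (Complex.normSq (D r) + ((D r) ^ 2).im))
          - (Complex.normSq (D 0) + ((D 0) ^ 2).im)) / 8 := by
        rw [Finset.sum_range_succ' (fun r => Complex.normSq (D r) + ((D r) ^ 2).im) n]
        ring
    _ = ((n : ℝ) + 1) / 4 := by
        rw [Finset.sum_add_distrib, hA, hB, hg0]
        ring

end main

section main2
variable {n : ℕ}


lemma sum_pt_eq_zero : ∑ i, pt n i = 0 := by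
  ext k
  have happ : (∑ i, pt n i) k = ∑ i, pt n i k := by simp
  rw [happ]
  set ω := om (n+1) with hω
  have hm0 : n + 1 ≠ 0 := Nat.succ_ne_zero n
  have hωk : (ω ^ ((k:ℕ)+1)) ^ (n+1) = 1 := by
    rw [← pow_mul, mul_comm, pow_mul, om_pow_m (n+1) hm0, one_pow]
  have hne : ω ^ ((k:ℕ)+1) ≠ 1 :=
    (Complex.isPrimitiveRoot_exp (n+1) hm0).pow_ne_one_of_pos_of_lt
      (Nat.succ_ne_zero _) (by omega)
  have hz : ∑ i ∈ range (n+1), (ω ^ ((k:ℕ)+1)) ^ i = 0 := sum_pow_eq_zero hωk hne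
  have : ∑ i : Fin (n+1), (ω ^ ((i:ℕ) * ((k:ℕ)+1))) = 0 := by
    rw [Fin.sum_univ_eq_sum_range (fun i => ω ^ (i * ((k:ℕ)+1))) (n+1)]
    rw [← hz]
    exact Finset.sum_congr rfl fun i _ => by rw [← pow_mul, mul_comm]
  show ∑ i : Fin (n+1), ((ω ^ ((i:ℕ) * ((k:ℕ)+1))).re
      + (ω ^ ((i:ℕ) * ((k:ℕ)+1))).im) / (2 * Real.sqrt 2) = 0
  rw [← Finset.sum_div, Finset.sum_add_distrib, ← Complex.re_sum, ← Complex.im_sum, this]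
  simp

lemma abs_pt_le (i : Fin (n+1)) (k : Fin n) : |pt n i k| ≤ 1 / 2 := by
  set z := om (n+1) ^ ((i : ℕ) * ((k : ℕ) + 1)) with hz
  have hns : Complex.normSq z = 1 := normSq_om_pow _ _
  have hsq : (z.re + z.im) ^ 2 ≤ 2 := by
    nlinarith [sq_nonneg (z.re - z.im), Complex.normSq_apply z, hns]
  have habs : |z.re + z.im| ≤ Real.sqrt 2 := by
    rw [← Real.sqrt_sq_eq_abs]
    exact Real.sqrt_le_sqrt hsq
  have h2 : (0:ℝ) < 2 * Real.sqrt 2 := by positivity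
  show |(z.re + z.im) / (2 * Real.sqrt 2)| ≤ 1 / 2
  rw [abs_div, abs_of_pos h2, div_le_div_iff₀ h2 (by norm_num)]
  calc |z.re + z.im| * 2 ≤ Real.sqrt 2 * 2 := by linarith
    _ = 1 * (2 * Real.sqrt 2) := by ring

end main2

lemma mem_simplex (n : ℕ) : simplexInCube n (Real.sqrt (n + 1) / 2) := by
  refine ⟨pt n, fun i j hij => ?_, sum_pt_eq_zero, abs_pt_le⟩
  rw [EuclideanSpace.dist_eq]
  have h1 : ∀ k : Fin n, dist (pt n i k) (pt n j k) ^ 2 = (pt n i k - pt n j k) ^ 2 := by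
    intro k; rw [Real.dist_eq, sq_abs]
  rw [Finset.sum_congr rfl (fun k _ => h1 k), dist_sq_sum i j hij]
  rw [show ((n:ℝ)+1)/4 = (Real.sqrt ((n:ℝ)+1)/2)^2 by
    rw [div_pow, Real.sq_sqrt (by positivity)]; norm_num]
  exact Real.sqrt_sq (by positivity)

lemma bdd (n : ℕ) (hn : 1 ≤ n) : BddAbove {ℓ : ℝ | simplexInCube n ℓ} := by
  refine ⟨Real.sqrt n, fun ℓ hℓ => ?_⟩
  obtain ⟨p, h1, h2, h3⟩ := hℓ
  have hne : (⟨0, by omega⟩ : Fin (n+1)) ≠ ⟨1, by omega⟩ := by simp [Fin.ext_iff]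
  rw [← h1 _ _ hne, EuclideanSpace.dist_eq]
  have hb : ∀ k : Fin n, dist (p ⟨0, by omega⟩ k) (p ⟨1, by omega⟩ k) ^ 2 ≤ 1 := by
    intro k
    have := abs_sub (p ⟨0, by omega⟩ k) (p ⟨1, by omega⟩ k)
    have hd : dist (p ⟨0, by omega⟩ k) (p ⟨1, by omega⟩ k) ≤ 1 := by
      rw [Real.dist_eq]
      calc |p ⟨0, by omega⟩ k - p ⟨1, by omega⟩ k|
          ≤ |p ⟨0, by omega⟩ k| + |p ⟨1, by omega⟩ k| := abs_sub _ _
        _ ≤ 1/2 + 1/2 := add_le_add (h3 _ _) (h3 _ _)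
        _ = 1 := by norm_num
    nlinarith [dist_nonneg (x := p ⟨0, by omega⟩ k) (y := p ⟨1, by omega⟩ k)]
  calc Real.sqrt (∑ k : Fin n, dist (p ⟨0, by omega⟩ k) (p ⟨1, by omega⟩ k) ^ 2)
      ≤ Real.sqrt (∑ _k : Fin n, (1:ℝ)) := Real.sqrt_le_sqrt (Finset.sum_le_sum fun k _ => hb k)
    _ = Real.sqrt n := by simp


end Stmt5Aux

/-- For every n ≥ 1, f₀(n) ≥ √(n+1)/2. -/
theorem stmt5 (n : ℕ) (hn : 1 ≤ n) : f0 n ≥ Real.sqrt (n + 1) / 2 := by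
  have h : Real.sqrt ((n:ℝ) + 1) / 2 ∈ {ℓ : ℝ | simplexInCube n ℓ} := Stmt5Aux.mem_simplex n
  exact le_csSup (Stmt5Aux.bdd n hn) h
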